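/- Every strong interval $d$-dimensional simplicial complex is a global interval $d$-dimensional simplicial complex. That is, if $\Delta$ is a pure $d$-dimensional simplicial complex on $n$ vertices admitting an interval representation $\{I_i\}_{i \in [n]}$ (a family of intervals such that a $(d+1)$-subset $\{i_1 < \dots < i_{d+1}\}$ is a facet if and only if $\bigcup_k I_{i_k}$ is an interval), then there is a labelling $[n]$ of the vertices such that for each facet $F: i_1 \dots i_{d+1}$ and each $j \notin F$ with $i_1 \leq j \leq i_{d+1}$, the set $\{i_1, \dots, i_d, j\}$ is a facet. -/
import Mathlib


/-- `F` (the facet family of a pure `d`-complex on `[n]`) satisfies the global interval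
condition w.r.t. the natural labelling: for each facet `s : i₁ < … < i_{d+1}` and each
`j ∉ s` with `i₁ ≤ j ≤ i_{d+1}`, the set `{i₁, …, i_d, j}` (replace the largest vertex
by `j`) is a facet. -/
def GlobalIntervalCond {n : ℕ} (F : Finset (Finset (Fin n))) : Prop :=
  ∀ s ∈ F, ∀ j : Fin n, j ∉ s → (∃ a ∈ s, a ≤ j) → (∃ b ∈ s, j ≤ b) →
    ∀ b ∈ s, (∀ c ∈ s, c ≤ b) → insert j (s.erase b) ∈ F

/-- every strong interval `d`-complex is a global interval `d`-complex.
`F` is the facet family of a pure `d`-complex on `[n]` admitting an interval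
representation `I` by nonempty closed real intervals: a `(d+1)`-set is a facet iff the
union of the corresponding intervals is an interval (order-convex).  Then some
relabelling of the vertices satisfies the global interval condition. -/
theorem stmt_3 (d n : ℕ) (F : Finset (Finset (Fin n)))
    (hpure : ∀ s ∈ F, s.card = d + 1)
    (I : Fin n → Set ℝ)
    (hI : ∀ v : Fin n, ∃ a b : ℝ, a ≤ b ∧ I v = Set.Icc a b)
    (hrep : ∀ s : Finset (Fin n), s.card = d + 1 →
      (s ∈ F ↔ (⋃ v ∈ s, I v).OrdConnected)) :
    ∃ σ : Equiv.Perm (Fin n),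
      GlobalIntervalCond (F.image fun s => s.image σ) := by
  classical
  choose a b hab hIv using hI
  refine ⟨(Tuple.sort a)⁻¹, ?_⟩
  set σ : Equiv.Perm (Fin n) := (Tuple.sort a)⁻¹ with hσ
  have hmono : ∀ v w : Fin n, σ v ≤ σ w → a v ≤ a w := by
    intro v w h
    have := Tuple.monotone_sort a h
    simpa [hσ] using this
  rintro s' hs' j' hj' ⟨u', hu', huj⟩ ⟨x', hx', hjx⟩ m' hm' hmax
  obtain ⟨s, hsF, rfl⟩ := Finset.mem_image.mp hs'
  set j : Fin n := σ.symm j' with hj'def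
  have hσj : σ j = j' := σ.apply_symm_apply j'
  obtain ⟨m, hms, hσm⟩ := Finset.mem_image.mp hm'
  have hjs : j ∉ s := fun h => hj' (Finset.mem_image.mpr ⟨j, h, hσj⟩)
  obtain ⟨u, hus, hσu⟩ := Finset.mem_image.mp hu'
  obtain ⟨x, hxs, hσx⟩ := Finset.mem_image.mp hx'
  -- translate hypotheses to endpoints
  have hmmax : ∀ c ∈ s, a c ≤ a m := by
    intro c hc
    exact hmono c m (hσm ▸ hmax (σ c) (Finset.mem_image.mpr ⟨c, hc, rfl⟩))
  have hjm : a j ≤ a m := by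
    refine hmono j m ?_
    rw [hσj, hσm]
    exact le_trans hjx (hmax x' hx')
  have huja : a u ≤ a j := hmono u j (by rw [hσj, hσu]; exact huj)
  -- the candidate facet
  refine Finset.mem_image.mpr ⟨insert j (s.erase m), ?_, ?_⟩
  swap
  · rw [Finset.image_insert, Finset.image_erase σ.injective, hσj, hσm]
  have hcard : (insert j (s.erase m)).card = d + 1 := by
    rw [Finset.card_insert_of_notMem (fun h => hjs (Finset.mem_of_mem_erase h)),
      Finset.card_erase_of_mem hms, hpure s hsF]
    omega
  refine (hrep _ hcard).mpr ?_
  rcases Finset.eq_empty_or_nonempty (s.erase m) with he | hne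
  · -- s = {m}, new set is {j}
    rw [he]
    simpa [hIv j] using Set.ordConnected_Icc (a := a j) (b := b j)
  · have hU : (⋃ v ∈ s, I v).OrdConnected := (hrep s (hpure s hsF)).mp hsF
    obtain ⟨v₀, hv₀s, hv₀min⟩ := s.exists_min_image a ⟨m, hms⟩
    obtain ⟨w, hwe, hwmax⟩ := (s.erase m).exists_max_image b hne
    have hws : w ∈ s := Finset.mem_of_mem_erase hwe
    have hmem : ∀ v ∈ s, ∀ z ∈ I v, z ∈ ⋃ v ∈ s, I v := by
      intro v hv z hz
      exact Set.mem_biUnion hv hz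
    have hαU : a v₀ ∈ ⋃ v ∈ s, I v :=
      hmem v₀ hv₀s _ (by rw [hIv v₀]; exact ⟨le_refl _, hab v₀⟩)
    have hv₀j : a v₀ ≤ a j := le_trans (hv₀min u hus) huja
    -- a m ≤ b w
    have hamw : a m ≤ b w := by
      by_contra hlt
      push_neg at hlt
      set z := (b w + a m) / 2 with hz
      have hz1 : b w < z := by rw [hz]; linarith
      have hz2 : z < a m := by rw [hz]; linarith
      have hzU : z ∈ ⋃ v ∈ s, I v := by
        refine hU.out hαU (hmem m hms (b m) ?_) ⟨le_trans (hv₀min w hws) (le_trans (hab w) hz1.le), le_trans hz2.le (hab m)⟩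
        rw [hIv m]; exact ⟨hab m, le_refl _⟩
      obtain ⟨v, hv, hzv⟩ := Set.mem_iUnion₂.mp hzU
      rw [hIv v] at hzv
      rcases eq_or_ne v m with rfl | hvm
      · exact absurd hzv.1 (not_le.mpr hz2)
      · exact absurd hzv.2 (not_le.mpr (lt_of_le_of_lt (hwmax v (Finset.mem_erase.mpr ⟨hvm, hv⟩)) hz1))
    -- the union equals an interval
    have hkey : (⋃ v ∈ insert j (s.erase m), I v) = Set.Icc (a v₀) (max (b w) (b j)) := by
      apply Set.Subset.antisymm
      · refine Set.iUnion₂_subset fun v hv => ?_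
        rw [hIv v]
        rcases Finset.mem_insert.mp hv with rfl | hv
        · exact Set.Icc_subset_Icc hv₀j (le_max_right _ _)
        · exact Set.Icc_subset_Icc (hv₀min v (Finset.mem_of_mem_erase hv))
            (le_trans (hwmax v hv) (le_max_left _ _))
      · rintro z ⟨hz1, hz2⟩
        rcases le_or_gt z (b w) with hzw | hzw
        · -- z ∈ U, hence in some I v; if v = m, move to w
          have hzU : z ∈ ⋃ v ∈ s, I v := by
            refine hU.out hαU (hmem w hws (b w) ?_) ⟨hz1, hzw⟩
            rw [hIv w]; exact ⟨hab w, le_refl _⟩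
          obtain ⟨v, hv, hzv⟩ := Set.mem_iUnion₂.mp hzU
          rcases eq_or_ne v m with rfl | hvm
          · refine Set.mem_biUnion (Finset.mem_insert_of_mem hwe) ?_
            rw [hIv v] at hzv
            rw [hIv w]
            exact ⟨le_trans (hmmax w hws) hzv.1, hzw⟩
          · exact Set.mem_biUnion (Finset.mem_insert_of_mem (Finset.mem_erase.mpr ⟨hvm, hv⟩)) hzv
        · -- z ∈ I j
          have hzj : z ≤ b j := by
            rcases max_cases (b w) (b j) with ⟨h1, h2⟩ | ⟨h1, h2⟩
            · linarith [h1 ▸ hz2]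
            · linarith [h1 ▸ hz2]
          refine Set.mem_biUnion (Finset.mem_insert_self _ _) ?_
          rw [hIv j]
          exact ⟨le_trans hjm (le_trans hamw hzw.le), hzj⟩
    rw [hkey]
    exact Set.ordConnected_Icc
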